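/- Let G be the path graph on n ≥ 3 vertices. If n is even then the resolving topological index of G equals Σ_{i=1}^{n/2} (2n² − 3n − 4i + 4) / (n(n−1)² − 2(n−1)(i−1)); if n is odd then it equals (2n² − 3n − 1)/(2n(n−1)²) + Σ_{i=1}^{⌊n/2⌋} (2n³ − 3n² − 4n(i−1) + 1) / (n²(n−1)² − 2n(n−1)(i−1)). -/

import Mathlib

open Finset

variable {V : Type*} [Fintype V] [DecidableEq V]

/-- The resolving neighborhood `R(u,v)`: the set of vertices resolving the pair `(u,v)`. -/
noncomputable def resolvingNbhd (G : SimpleGraph V) (u v : V) : Finset V :=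
  Finset.univ.filter fun x => G.dist u x ≠ G.dist v x

/-- The resolving share `r_w(u,v)` of a vertex `w` for the pair `(u,v)`. -/
noncomputable def rShare (G : SimpleGraph V) (w u v : V) : ℚ :=
  if G.dist u w ≠ G.dist v w then 1 / (resolvingNbhd G u v).card else 0

/-- The resolvent neighborhood of `w`, as ordered pairs. Since `rShare` is symmetric
in the pair, averaging over ordered pairs agrees with averaging over unordered pairs. -/
noncomputable def resolventNbhd (G : SimpleGraph V) (w : V) : Finset (V × V) :=
  Finset.univ.filter fun p => p.1 ≠ p.2 ∧ G.dist p.1 w ≠ G.dist p.2 w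

/-- The average resolving share `ar_w(G)` of `w` in `G`. -/
noncomputable def arShare (G : SimpleGraph V) (w : V) : ℚ :=
  (∑ p ∈ resolventNbhd G w, rShare G w p.1 p.2) / (resolventNbhd G w).card

/-- The resolving topological index `𝓡(G)`. -/
noncomputable def rIndex (G : SimpleGraph V) : ℚ :=
  ∑ w : V, arShare G w

section aux
open SimpleGraph



lemma pg_walk_len {n : ℕ} {u v : Fin n} (p : (pathGraph n).Walk u v) :
    Nat.dist u.val v.val ≤ p.length := by
  induction p with
  | nil => simp [Nat.dist_self]
  | cons h q ih =>
    rename_i a b c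
    rw [pathGraph_adj] at h
    calc Nat.dist a.val c.val ≤ Nat.dist a.val b.val + Nat.dist b.val c.val :=
          Nat.dist.triangle_inequality _ _ _
      _ ≤ 1 + q.length := by
          have : Nat.dist a.val b.val = 1 := by
            rcases h with h | h <;> simp [Nat.dist] <;> omega
          omega
    simp [SimpleGraph.Walk.length_cons]; omega

lemma pg_dist_le {n : ℕ} : ∀ (k : ℕ) (u v : Fin n), u.val + k = v.val →
    (pathGraph n).dist u v ≤ k := by
  intro k
  induction k with
  | zero => intro u v h; have : u = v := Fin.ext (by omega); simp [this, SimpleGraph.dist_self]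
  | succ k ih =>
    intro u v h
    have hlt : u.val + 1 < n := by omega
    set b : Fin n := ⟨u.val + 1, hlt⟩ with hb
    have hadj : (pathGraph n).Adj u b := by rw [pathGraph_adj]; left; rfl
    have h1 : (pathGraph n).dist u b ≤ 1 :=
      SimpleGraph.dist_le (SimpleGraph.Walk.cons hadj SimpleGraph.Walk.nil)
    have h2 : (pathGraph n).dist b v ≤ k := ih b v (by simp [hb]; omega)
    have hconn : (pathGraph n).Connected := by
      have : n - 1 + 1 = n := by
        have : 1 ≤ n := Nat.one_le_iff_ne_zero.mpr (by rintro rfl; exact absurd u.isLt (by omega))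
        omega
      rw [← this]; exact pathGraph_connected _
    calc (pathGraph n).dist u v ≤ _ + _ := hconn.dist_triangle (v := b)
      _ ≤ k + 1 := by omega
    

lemma pg_dist {n : ℕ} (u v : Fin n) :
    (pathGraph n).dist u v = Nat.dist u.val v.val := by
  apply le_antisymm
  · rcases le_total u.val v.val with h | h
    · have := pg_dist_le (v.val - u.val) u v (by omega)
      rwa [Nat.dist_eq_sub_of_le h]
    · have := pg_dist_le (u.val - v.val) v u (by omega)
      rw [Nat.dist_comm, Nat.dist_eq_sub_of_le h, SimpleGraph.dist_comm]
      exact this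
  · have hconn : (pathGraph n).Connected := by
      have h1 : 1 ≤ n := Nat.one_le_iff_ne_zero.mpr (by rintro rfl; exact absurd u.isLt (by omega))
      have : n - 1 + 1 = n := by omega
      rw [← this]; exact pathGraph_connected _
    obtain ⟨p, hp⟩ := hconn.exists_walk_length_eq_dist u v
    rw [← hp]; exact pg_walk_len p

lemma card_fin_filter (n : ℕ) (Q : ℕ → Prop) [DecidablePred Q] :
    (Finset.univ.filter (fun x : Fin n => Q x.val)).card = ((range n).filter Q).card := by
  rw [Finset.card_filter, Finset.card_filter,
    ← Fin.sum_univ_eq_sum_range (fun i => if Q i then 1 else 0) n]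

lemma card_pair_filter (n : ℕ) (Q : ℕ → ℕ → Prop) [∀ a b, Decidable (Q a b)] :
    (Finset.univ.filter (fun p : Fin n × Fin n => Q p.1.val p.2.val)).card
      = ∑ u ∈ range n, ((range n).filter (Q u)).card := by
  rw [Finset.card_filter, Fintype.sum_prod_type,
    ← Fin.sum_univ_eq_sum_range (fun u => ((range n).filter (Q u)).card) n]
  refine Finset.sum_congr rfl fun u _ => ?_
  rw [Finset.card_filter, ← Fin.sum_univ_eq_sum_range (fun v => if Q u.val v then 1 else 0) n]

lemma count_parity (n : ℕ) : ((range n).filter (fun v => 2 ∣ v)).card = n - n/2 ∧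
    ((range n).filter (fun v => ¬ 2 ∣ v)).card = n/2 := by
  induction n with
  | zero => simp
  | succ n ih =>
    obtain ⟨h1, h2⟩ := ih
    rw [range_add_one, filter_insert, filter_insert]
    by_cases h : 2 ∣ n
    · rw [if_pos h, if_neg (not_not_intro h), card_insert_of_notMem (by simp)]
      omega
    · rw [if_neg h, if_pos (by omega), card_insert_of_notMem (by simp)]
      omega

lemma count_odd_shift (n u : ℕ) :
    ((range n).filter (fun v => ¬ 2 ∣ (u + v))).card = if 2 ∣ u then n/2 else n - n/2 := by
  by_cases hu : 2 ∣ u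
  · rw [if_pos hu, ← (count_parity n).2]
    exact congrArg _ (filter_congr fun x _ => by constructor <;> intro <;> omega)
  · rw [if_neg hu, ← (count_parity n).1]
    exact congrArg _ (filter_congr fun x _ => by constructor <;> intro <;> omega)

def Aq (n : ℕ) : ℕ := 2 * (n / 2) * (n - n / 2)

lemma A_count (n : ℕ) :
    (Finset.univ.filter (fun p : Fin n × Fin n => ¬ 2 ∣ (p.1.val + p.2.val))).card = Aq n := by
  rw [card_pair_filter n (fun a b => ¬ 2 ∣ (a + b))]
  rw [Finset.sum_congr rfl (fun u _ => count_odd_shift n u)]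
  rw [Finset.sum_ite, Finset.sum_const, Finset.sum_const]
  rw [(count_parity n).1, (count_parity n).2]
  simp only [smul_eq_mul, Aq]
  ring

lemma diag_count (n : ℕ) :
    (Finset.univ.filter (fun p : Fin n × Fin n => p.1.val = p.2.val)).card = n := by
  rw [card_pair_filter n (fun a b => a = b)]
  rw [Finset.sum_congr rfl (fun u hu => ?_), Finset.sum_const, card_range, smul_eq_mul, mul_one]
  have : (range n).filter (fun v => u = v) = {u} := by
    ext x; simp only [mem_filter, mem_range, mem_singleton]
    rw [mem_range] at hu
    omega
  rw [this, card_singleton]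

lemma total_count (n : ℕ) :
    (Finset.univ.filter (fun p : Fin n × Fin n => True)).card = n * n := by
  simp [Finset.card_univ]

def mcount (n w : ℕ) : ℕ := 2 * min w (n - 1 - w)

lemma m_count (n : ℕ) (w : ℕ) (hw : w < n) :
    (Finset.univ.filter (fun p : Fin n × Fin n =>
      p.1.val ≠ p.2.val ∧ p.1.val + p.2.val = 2 * w)).card = mcount n w := by
  rw [card_pair_filter n (fun a b => a ≠ b ∧ a + b = 2 * w)]
  have key : ∀ u ∈ range n, ((range n).filter (fun v => u ≠ v ∧ u + v = 2 * w)).card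
      = if u ≤ 2*w ∧ 2*w < n + u ∧ u ≠ w then 1 else 0 := by
    intro u hu
    rw [mem_range] at hu
    by_cases hP : u ≤ 2*w ∧ 2*w < n + u ∧ u ≠ w
    · rw [if_pos hP]
      have : (range n).filter (fun v => u ≠ v ∧ u + v = 2 * w) = {2*w - u} := by
        ext x; simp only [mem_filter, mem_range, mem_singleton]; omega
      rw [this, card_singleton]
    · rw [if_neg hP]
      have : (range n).filter (fun v => u ≠ v ∧ u + v = 2 * w) = ∅ := by
        ext x; simp only [mem_filter, mem_range, notMem_empty, iff_false]; omega
      rw [this, card_empty]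
  rw [Finset.sum_congr rfl key, ← Finset.card_filter]
  have : (range n).filter (fun u => u ≤ 2*w ∧ 2*w < n + u ∧ u ≠ w)
      = (Finset.Icc (2*w + 1 - n) (min (2*w) (n-1))).erase w := by
    ext x; simp only [mem_filter, mem_range, mem_erase, Finset.mem_Icc]; omega
  rw [this, Finset.card_erase_of_mem (by rw [Finset.mem_Icc]; omega), Nat.card_Icc, mcount]
  omega

lemma split_count {α : Type*} [DecidableEq α] (s : Finset α) (p q : α → Prop)
    [DecidablePred p] [DecidablePred q] :
    (s.filter fun a => p a ∧ q a).card + (s.filter fun a => p a ∧ ¬ q a).card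
      = (s.filter p).card := by
  rw [← Finset.filter_filter, ← Finset.filter_filter,
    Finset.card_filter_add_card_filter_not]

lemma dist_eq_iff {n : ℕ} (u v x : Fin n) :
    (pathGraph n).dist u x = (pathGraph n).dist v x ↔
      (u.val = v.val ∨ u.val + v.val = 2 * x.val) := by
  rw [pg_dist, pg_dist, Nat.dist, Nat.dist]
  omega

lemma card_R {n : ℕ} (u v : Fin n) (huv : u ≠ v) :
    (resolvingNbhd (pathGraph n) u v).card = if 2 ∣ (u.val + v.val) then n - 1 else n := by
  have hne : u.val ≠ v.val := fun h => huv (Fin.ext h)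
  unfold resolvingNbhd
  rw [filter_congr (fun x _ => show _ ↔ ¬ (u.val + v.val = 2 * x.val) by
    rw [ne_eq, dist_eq_iff]; simp [hne])]
  rw [card_fin_filter n (fun xv => ¬ (u.val + v.val = 2 * xv))]
  by_cases h2 : 2 ∣ (u.val + v.val)
  · rw [if_pos h2]
    have hm : (u.val + v.val) / 2 < n := by
      have := u.isLt; have := v.isLt; omega
    have : (range n).filter (fun xv => ¬ (u.val + v.val = 2 * xv))
        = (range n).erase ((u.val + v.val) / 2) := by
      ext x; simp only [mem_filter, mem_range, mem_erase]; omega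
    rw [this, Finset.card_erase_of_mem (by rw [mem_range]; exact hm), card_range]
  · rw [if_neg h2]
    have : (range n).filter (fun xv => ¬ (u.val + v.val = 2 * xv)) = range n := by
      ext x; simp only [mem_filter, mem_range, iff_self_and]; omega
    rw [this, card_range]

lemma resolventNbhd_eq {n : ℕ} (w : Fin n) :
    resolventNbhd (pathGraph n) w = Finset.univ.filter
      (fun p : Fin n × Fin n => p.1.val ≠ p.2.val ∧ ¬ (p.1.val + p.2.val = 2 * w.val)) := by
  unfold resolventNbhd
  refine filter_congr fun p _ => ?_
  simp only [ne_eq, Fin.ext_iff]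
  rw [dist_eq_iff]
  omega

lemma card_resolvent {n : ℕ} (w : Fin n) :
    (resolventNbhd (pathGraph n) w).card + mcount n w.val + n = n * n := by
  rw [resolventNbhd_eq]
  have h1 := split_count (Finset.univ : Finset (Fin n × Fin n))
    (fun p => p.1.val ≠ p.2.val) (fun p => p.1.val + p.2.val = 2 * w.val)
  have h2 := Finset.card_filter_add_card_filter_not
    (s := (Finset.univ : Finset (Fin n × Fin n))) (p := fun p => p.1.val = p.2.val)
  rw [diag_count] at h2
  simp only [Finset.card_univ, Fintype.card_prod, Fintype.card_fin] at h2
  have h3 := m_count n w.val w.isLt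
  simp only [ne_eq] at h1 h2 h3 ⊢
  omega

lemma even_res_count {n : ℕ} (w : Fin n) :
    (Finset.univ.filter (fun p : Fin n × Fin n =>
        (2 ∣ (p.1.val + p.2.val)) ∧ (¬ (p.1.val = p.2.val) ∧ ¬ (p.1.val + p.2.val = 2 * w.val)))).card
      + (Aq n + mcount n w.val + n) = n * n := by
  classical
  have h0 := Finset.card_filter_add_card_filter_not
    (s := (Finset.univ : Finset (Fin n × Fin n))) (p := fun p : Fin n × Fin n => ¬ 2 ∣ (p.1.val + p.2.val))
  rw [A_count] at h0
  simp only [Finset.card_univ, Fintype.card_prod, Fintype.card_fin, not_not] at h0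
  have h1 := split_count (Finset.univ : Finset (Fin n × Fin n)) (fun p : Fin n × Fin n => 2 ∣ (p.1.val + p.2.val))
    (fun p => p.1.val = p.2.val)
  have h2 : ((Finset.univ : Finset (Fin n × Fin n)).filter fun p : Fin n × Fin n =>
      (2 ∣ (p.1.val + p.2.val)) ∧ p.1.val = p.2.val).card = n := by
    have he : ((Finset.univ : Finset (Fin n × Fin n)).filter fun p : Fin n × Fin n =>
        (2 ∣ (p.1.val + p.2.val)) ∧ p.1.val = p.2.val)
        = (Finset.univ : Finset (Fin n × Fin n)).filter fun p : Fin n × Fin n => p.1.val = p.2.val := by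
      refine filter_congr fun p _ => ?_
      constructor
      · rintro ⟨_, h⟩; exact h
      · intro h; exact ⟨by omega, h⟩
    rw [he]; exact diag_count n
  have h3 := split_count (Finset.univ : Finset (Fin n × Fin n)) (fun p : Fin n × Fin n =>
      (2 ∣ (p.1.val + p.2.val)) ∧ ¬ (p.1.val = p.2.val))
    (fun p => p.1.val + p.2.val = 2 * w.val)
  have h4 : ((Finset.univ : Finset (Fin n × Fin n)).filter fun p : Fin n × Fin n =>
      ((2 ∣ (p.1.val + p.2.val)) ∧ ¬ (p.1.val = p.2.val)) ∧ p.1.val + p.2.val = 2 * w.val).card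
      = mcount n w.val := by
    have he : ((Finset.univ : Finset (Fin n × Fin n)).filter fun p : Fin n × Fin n =>
        ((2 ∣ (p.1.val + p.2.val)) ∧ ¬ (p.1.val = p.2.val)) ∧ p.1.val + p.2.val = 2 * w.val)
        = (Finset.univ : Finset (Fin n × Fin n)).filter fun p : Fin n × Fin n => p.1.val ≠ p.2.val ∧ p.1.val + p.2.val = 2 * w.val := by
      refine filter_congr fun p _ => ?_
      constructor
      · rintro ⟨⟨_, ha⟩, hb⟩; exact ⟨ha, hb⟩
      · rintro ⟨ha, hb⟩; exact ⟨⟨by omega, ha⟩, hb⟩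
    rw [he]; exact m_count n w.val w.isLt
  have h5 : ((Finset.univ : Finset (Fin n × Fin n)).filter (fun p : Fin n × Fin n =>
      (2 ∣ (p.1.val + p.2.val)) ∧ (¬ (p.1.val = p.2.val) ∧ ¬ (p.1.val + p.2.val = 2 * w.val)))).card
      = ((Finset.univ : Finset (Fin n × Fin n)).filter (fun p : Fin n × Fin n =>
      ((2 ∣ (p.1.val + p.2.val)) ∧ ¬ (p.1.val = p.2.val)) ∧ ¬ (p.1.val + p.2.val = 2 * w.val))).card := by
    exact congrArg _ (filter_congr fun p _ => by tauto)
  rw [h5]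
  have h6 : ((Finset.univ : Finset (Fin n × Fin n)).filter fun p : Fin n × Fin n =>
      2 ∣ (p.1.val + p.2.val) ∧ ¬ (p.1.val = p.2.val)).card
      = ((Finset.univ : Finset (Fin n × Fin n)).filter fun a : Fin n × Fin n =>
      2 ∣ (a.1.val + a.2.val) ∧ ¬ (a.1.val = a.2.val)).card := rfl
  omega

noncomputable def Fterm (n k : ℕ) : ℚ :=
  ((Aq n : ℚ)/n + ((n:ℚ)*n - Aq n - 2*k - n)/((n:ℚ)-1)) / ((n:ℚ)*n - 2*k - n)

lemma sum_rShare {n : ℕ} (hn : 3 ≤ n) (w : Fin n) :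
    ∑ p ∈ resolventNbhd (pathGraph n) w, rShare (pathGraph n) w p.1 p.2
      = (Aq n : ℚ)/n + ((n:ℚ)*n - Aq n - mcount n w.val - n)/((n:ℚ)-1) := by
  have hext : ∑ p ∈ resolventNbhd (pathGraph n) w, rShare (pathGraph n) w p.1 p.2
      = ∑ p : Fin n × Fin n, rShare (pathGraph n) w p.1 p.2 := by
    refine Finset.sum_subset (Finset.subset_univ _) fun p _ hp => ?_
    have hd : ¬ (pathGraph n).dist p.1 w ≠ (pathGraph n).dist p.2 w := by
      intro hd
      exact hp (by
        rw [resolventNbhd, Finset.mem_filter]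
        exact ⟨Finset.mem_univ _, fun he => hd (by rw [he]), hd⟩)
    simp only [rShare, if_neg hd]
  rw [hext]
  have hpt : ∀ p : Fin n × Fin n, rShare (pathGraph n) w p.1 p.2
      = (if ¬ 2 ∣ (p.1.val + p.2.val) then (1:ℚ)/n else 0)
        + (if (2 ∣ (p.1.val + p.2.val)) ∧ (¬ (p.1.val = p.2.val) ∧ ¬ (p.1.val + p.2.val = 2 * w.val))
            then (1:ℚ)/(((n:ℕ) - 1 : ℕ) : ℚ) else 0) := by
    intro p
    by_cases hne : p.1.val = p.2.val
    · have hd : (pathGraph n).dist p.1 w = (pathGraph n).dist p.2 w := by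
        rw [dist_eq_iff]; left; exact hne
      have h2 : 2 ∣ (p.1.val + p.2.val) := by omega
      simp only [rShare]
      rw [if_neg (not_not_intro hd), if_neg (not_not_intro h2), if_neg (by tauto)]
      norm_num
    · have hfne : p.1 ≠ p.2 := fun h => hne (congrArg Fin.val h)
      by_cases h2 : 2 ∣ (p.1.val + p.2.val)
      · by_cases hmid : p.1.val + p.2.val = 2 * w.val
        · have hd : (pathGraph n).dist p.1 w = (pathGraph n).dist p.2 w := by
            rw [dist_eq_iff]; right; exact hmid
          simp only [rShare]
          rw [if_neg (not_not_intro hd), if_neg (not_not_intro h2), if_neg (by tauto)]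
          norm_num
        · have hd : (pathGraph n).dist p.1 w ≠ (pathGraph n).dist p.2 w := by
            rw [ne_eq, dist_eq_iff]; push_neg; exact ⟨hne, hmid⟩
          simp only [rShare]
          rw [if_pos hd, card_R p.1 p.2 hfne, if_pos h2,
            if_neg (not_not_intro h2), if_pos ⟨h2, hne, hmid⟩]
          norm_num
      · have hd : (pathGraph n).dist p.1 w ≠ (pathGraph n).dist p.2 w := by
          rw [ne_eq, dist_eq_iff]; push_neg
          exact ⟨hne, fun hmid => h2 (by omega)⟩
        simp only [rShare]
        rw [if_pos hd, card_R p.1 p.2 hfne, if_neg h2, if_pos h2, if_neg (by tauto)]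
        norm_num
  rw [Finset.sum_congr rfl fun p _ => hpt p, Finset.sum_add_distrib]
  rw [← Finset.sum_filter, ← Finset.sum_filter, Finset.sum_const, Finset.sum_const]
  rw [A_count]
  have hB := even_res_count w
  have hBq : ((Finset.univ.filter (fun p : Fin n × Fin n =>
      (2 ∣ (p.1.val + p.2.val)) ∧ (¬ (p.1.val = p.2.val) ∧ ¬ (p.1.val + p.2.val = 2 * w.val)))).card : ℚ)
      = (n:ℚ)*n - Aq n - mcount n w.val - n := by
    have h' : (((Finset.univ.filter (fun p : Fin n × Fin n =>
        (2 ∣ (p.1.val + p.2.val)) ∧ (¬ (p.1.val = p.2.val) ∧ ¬ (p.1.val + p.2.val = 2 * w.val)))).card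
        + (Aq n + mcount n w.val + n) : ℕ) : ℚ) = ((n*n : ℕ) : ℚ) := by rw [hB]
    push_cast at h'
    linarith
  rw [nsmul_eq_mul, nsmul_eq_mul, hBq]
  have hcast : (((n:ℕ) - 1 : ℕ) : ℚ) = (n:ℚ) - 1 := by
    rw [Nat.cast_sub (by omega), Nat.cast_one]
  rw [hcast]
  ring

lemma arShare_eq {n : ℕ} (hn : 3 ≤ n) (w : Fin n) :
    arShare (pathGraph n) w = Fterm n (min w.val (n - 1 - w.val)) := by
  rw [arShare, sum_rShare hn w]
  set k := min w.val (n - 1 - w.val) with hk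
  have hm : mcount n w.val = 2 * k := by rw [mcount, hk]
  have hc := card_resolvent w
  rw [hm] at hc
  have hcq : ((resolventNbhd (pathGraph n) w).card : ℚ) = (n:ℚ)*n - 2*(k:ℚ) - n := by
    have h' : (((resolventNbhd (pathGraph n) w).card + 2*k + n : ℕ) : ℚ) = ((n*n : ℕ) : ℚ) := by
      rw [hc]
    push_cast at h'
    linarith
  rw [hcq, hm]
  unfold Fterm
  push_cast
  ring_nf

lemma rIndex_eq {n : ℕ} (hn : 3 ≤ n) :
    rIndex (pathGraph n) = ∑ w ∈ range n, Fterm n (min w (n - 1 - w)) := by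
  rw [rIndex, Finset.sum_congr rfl fun w _ => arShare_eq hn w,
    ← Fin.sum_univ_eq_sum_range (fun w => Fterm n (min w (n - 1 - w))) n]

lemma sum_min_split (F : ℕ → ℚ) (n : ℕ) :
    ∑ w ∈ range n, F (min w (n - 1 - w)) =
      (∑ i ∈ range ((n+1)/2), F i) + ∑ i ∈ range (n/2), F i := by
  rw [Finset.range_eq_Ico, Finset.range_eq_Ico, Finset.range_eq_Ico,
    ← Finset.sum_Ico_consecutive _ (Nat.zero_le ((n+1)/2)) (by omega : (n+1)/2 ≤ n)]
  congr 1
  · refine Finset.sum_congr rfl fun w hw => ?_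
    rw [Finset.mem_Ico] at hw
    congr 1
    omega
  · refine Finset.sum_nbij' (fun w => n - 1 - w) (fun i => n - 1 - i) ?_ ?_ ?_ ?_ ?_
    · intro a ha; simp only [Finset.mem_Ico] at ha ⊢; omega
    · intro a ha; simp only [Finset.mem_Ico] at ha ⊢; omega
    · intro a ha; simp only [Finset.mem_Ico] at ha; show n - 1 - (n - 1 - a) = a; omega
    · intro a ha; simp only [Finset.mem_Ico] at ha; show n - 1 - (n - 1 - a) = a; omega
    · intro a ha; simp only [Finset.mem_Ico] at ha
      show F (min a (n - 1 - a)) = F (n - 1 - a)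
      congr 1
      omega

lemma Fterm_denoms {n : ℕ} (hn : 3 ≤ n) (i : ℕ) (hi : 2 * i + 2 ≤ n) :
    (n:ℚ) ≠ 0 ∧ (n:ℚ) - 1 ≠ 0 ∧ (n:ℚ)*n - 2*i - n ≠ 0 := by
  have h3 : (3:ℚ) ≤ n := by exact_mod_cast hn
  have h2i : 2*(i:ℚ) + 2 ≤ n := by exact_mod_cast hi
  refine ⟨by positivity, by nlinarith, ?_⟩
  nlinarith

lemma even_pt {n k : ℕ} (hn : 3 ≤ n) (hk : n = k + k) (i : ℕ) (hi : i < n/2) :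
    Fterm n i + Fterm n i =
      (2 * (n : ℚ) ^ 2 - 3 * n - 4 * ((i+1 : ℕ) : ℚ) + 4) /
        ((n : ℚ) * ((n : ℚ) - 1) ^ 2 - 2 * ((n : ℚ) - 1) * (((i+1 : ℕ) : ℚ) - 1)) := by
  have hnk : (n:ℚ) = (k:ℚ) + (k:ℚ) := by exact_mod_cast hk
  have hA : (Aq n : ℚ) = (n:ℚ)*n/2 := by
    have e1 : n / 2 = k := by omega
    have e2 : n - n / 2 = k := by omega
    rw [Aq, e2, e1]
    push_cast
    rw [hnk]; ring
  obtain ⟨h0, h1, hd⟩ := Fterm_denoms hn i (by omega)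
  unfold Fterm
  push_cast
  rw [hA]
  have hd2 : (n:ℚ) * ((n:ℚ)-1)^2 - 2*((n:ℚ)-1)*(((i:ℚ)+1)-1) = ((n:ℚ)-1)*((n:ℚ)*n - 2*i - n) := by
    ring
  rw [hd2]
  field_simp
  ring

lemma odd_mid {n k : ℕ} (hn : 3 ≤ n) (hk : n = 2*k + 1) :
    Fterm n k = (2 * (n : ℚ) ^ 2 - 3 * n - 1) / (2 * n * ((n : ℚ) - 1) ^ 2) := by
  have hnk : 2 * (k:ℚ) = (n:ℚ) - 1 := by
    have : (n:ℚ) = 2*(k:ℚ) + 1 := by exact_mod_cast hk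
    linarith
  have hA : (Aq n : ℚ) = ((n:ℚ)*n - 1)/2 := by
    have e1 : n / 2 = k := by omega
    have e2 : n - n / 2 = k + 1 := by omega
    rw [Aq, e2, e1]
    push_cast
    nlinarith [hnk]
  obtain ⟨h0, h1, -⟩ := Fterm_denoms hn 0 (by omega)
  unfold Fterm
  rw [hA, hnk]
  have h2 : (n:ℚ)*n - ((n:ℚ)-1) - n = ((n:ℚ)-1)^2 := by ring
  rw [h2]
  have h3 : ((n:ℚ)-1)^2 ≠ 0 := pow_ne_zero _ h1
  field_simp
  ring

lemma odd_pt {n k : ℕ} (hn : 3 ≤ n) (hk : n = 2*k + 1) (i : ℕ) (hi : i < n/2) :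
    Fterm n i + Fterm n i =
      (2 * (n : ℚ) ^ 3 - 3 * (n : ℚ) ^ 2 - 4 * n * (((i+1 : ℕ) : ℚ) - 1) + 1) /
        ((n : ℚ) ^ 2 * ((n : ℚ) - 1) ^ 2 - 2 * n * ((n : ℚ) - 1) * (((i+1 : ℕ) : ℚ) - 1)) := by
  have hnk : 2 * (k:ℚ) = (n:ℚ) - 1 := by
    have : (n:ℚ) = 2*(k:ℚ) + 1 := by exact_mod_cast hk
    linarith
  have hA : (Aq n : ℚ) = ((n:ℚ)*n - 1)/2 := by
    have e1 : n / 2 = k := by omega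
    have e2 : n - n / 2 = k + 1 := by omega
    rw [Aq, e2, e1]
    push_cast
    nlinarith [hnk]
  obtain ⟨h0, h1, hd⟩ := Fterm_denoms hn i (by omega)
  unfold Fterm
  push_cast
  rw [hA]
  have hd2 : (n:ℚ)^2 * ((n:ℚ)-1)^2 - 2*n*((n:ℚ)-1)*(((i:ℚ)+1)-1)
      = (n:ℚ)*((n:ℚ)-1)*((n:ℚ)*n - 2*i - n) := by ring
  rw [hd2]
  field_simp
  ring


end aux

/-- The resolving topological index of the path on `n ≥ 3` vertices. -/
theorem rIndex_pathGraph (n : ℕ) (hn : 3 ≤ n) :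
    (Even n →
      rIndex (SimpleGraph.pathGraph n) =
        ∑ i ∈ Finset.Icc 1 (n / 2),
          (2 * (n : ℚ) ^ 2 - 3 * n - 4 * i + 4) /
            ((n : ℚ) * ((n : ℚ) - 1) ^ 2 - 2 * ((n : ℚ) - 1) * ((i : ℚ) - 1))) ∧
    (Odd n →
      rIndex (SimpleGraph.pathGraph n) =
        (2 * (n : ℚ) ^ 2 - 3 * n - 1) / (2 * n * ((n : ℚ) - 1) ^ 2) +
          ∑ i ∈ Finset.Icc 1 (n / 2),
            (2 * (n : ℚ) ^ 3 - 3 * (n : ℚ) ^ 2 - 4 * n * ((i : ℚ) - 1) + 1) /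
              ((n : ℚ) ^ 2 * ((n : ℚ) - 1) ^ 2 - 2 * n * ((n : ℚ) - 1) * ((i : ℚ) - 1))) := by
  constructor
  · intro he
    obtain ⟨k, hk⟩ := he
    rw [rIndex_eq hn, sum_min_split, show (n+1)/2 = n/2 from by omega,
      ← Finset.sum_add_distrib]
    refine Finset.sum_nbij' (fun i => i + 1) (fun i => i - 1) ?_ ?_ ?_ ?_ ?_
    · intro a ha; simp only [Finset.mem_range] at ha; simp only [Finset.mem_Icc]; omega
    · intro a ha; simp only [Finset.mem_Icc] at ha; simp only [Finset.mem_range]; omega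
    · intro a ha; simp only [Finset.mem_range] at ha; show a + 1 - 1 = a; omega
    · intro a ha; simp only [Finset.mem_Icc] at ha; show a - 1 + 1 = a; omega
    · intro a ha
      simp only [Finset.mem_range] at ha
      exact even_pt hn hk a ha
  · intro ho
    obtain ⟨k, hk⟩ := ho
    rw [rIndex_eq hn, sum_min_split, show (n+1)/2 = n/2 + 1 from by omega,
      Finset.sum_range_succ]
    have hmid : Fterm n (n/2) = (2 * (n : ℚ) ^ 2 - 3 * n - 1) / (2 * n * ((n : ℚ) - 1) ^ 2) := by
      rw [show n/2 = k from by omega]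
      exact odd_mid hn hk
    have hsum : (∑ i ∈ range (n/2), Fterm n i) + ∑ i ∈ range (n/2), Fterm n i
        = ∑ i ∈ Finset.Icc 1 (n / 2),
            (2 * (n : ℚ) ^ 3 - 3 * (n : ℚ) ^ 2 - 4 * n * ((i : ℚ) - 1) + 1) /
              ((n : ℚ) ^ 2 * ((n : ℚ) - 1) ^ 2 - 2 * n * ((n : ℚ) - 1) * ((i : ℚ) - 1)) := by
      rw [← Finset.sum_add_distrib]
      refine Finset.sum_nbij' (fun i => i + 1) (fun i => i - 1) ?_ ?_ ?_ ?_ ?_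
      · intro a ha; simp only [Finset.mem_range] at ha; simp only [Finset.mem_Icc]; omega
      · intro a ha; simp only [Finset.mem_Icc] at ha; simp only [Finset.mem_range]; omega
      · intro a ha; simp only [Finset.mem_range] at ha; show a + 1 - 1 = a; omega
      · intro a ha; simp only [Finset.mem_Icc] at ha; show a - 1 + 1 = a; omega
      · intro a ha
        simp only [Finset.mem_range] at ha
        exact odd_pt hn hk a ha
    rw [hmid]
    linarith [hsum]
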